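/- Let m ≥ 3 and let x_1, ..., x_m be reals with 0 ≤ x_i ≤ 1 and ∑_{i=1}^m x_i = 1. Then ∑_{i=1}^m (2/π)·arccos(1 − Δ_i) ≥ 2, where Δ_i := x_i + x_{i+1} − x_i x_{i+1} with indices taken modulo m. -/

import Mathlib

set_option maxHeartbeats 1600000

open Real Finset Set

-- concavity corollary for sin
lemma my_sin_concave {d θ : ℝ} (hd0 : 0 ≤ d) (hd1 : d ≤ 1) (hθ0 : 0 ≤ θ) (hθπ : θ ≤ π) :
    d * Real.sin θ ≤ Real.sin (d * θ) := by
  have h := strictConcaveOn_sin_Icc.concaveOn.2 (x := θ) (y := 0)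
    ⟨hθ0, hθπ⟩ ⟨le_rfl, Real.pi_pos.le⟩ hd0 (by linarith : (0:ℝ) ≤ 1 - d) (by ring)
  simpa using h

-- L1
lemma my_arccos_mul {c d : ℝ} (hc0 : 0 ≤ c) (hc1 : c ≤ 1) (hd0 : 0 ≤ d) (hd1 : d ≤ 1) :
    d * Real.arccos c + (1 - d) * (π / 2) ≤ Real.arccos (c * d) := by
  set θ := Real.arcsin c with hθ
  have hθ0 : 0 ≤ θ := Real.arcsin_nonneg.2 hc0
  have hθhalf : θ ≤ π / 2 := Real.arcsin_le_pi_div_two c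
  have hsin : Real.sin θ = c := Real.sin_arcsin (by linarith) hc1
  have h1 : c * d ≤ Real.sin (d * θ) := by
    have := my_sin_concave hd0 hd1 hθ0 (by linarith [Real.pi_pos] : θ ≤ π)
    rw [hsin] at this; linarith
  have h2 : Real.arcsin (c * d) ≤ d * θ := by
    have hmono := Real.monotone_arcsin h1
    rwa [Real.arcsin_sin (by nlinarith [Real.pi_pos])
      (by nlinarith [Real.pi_pos] : d * θ ≤ π / 2)] at hmono
  rw [Real.arccos_eq_pi_div_two_sub_arcsin, Real.arccos_eq_pi_div_two_sub_arcsin]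
  have : Real.arcsin (c*d) ≤ d * Real.arcsin c := h2
  linarith

-- arccos antitone (global, using monotone_arcsin)
lemma my_arccos_anti {a b : ℝ} (h : a ≤ b) : Real.arccos b ≤ Real.arccos a := by
  rw [Real.arccos_eq_pi_div_two_sub_arcsin, Real.arccos_eq_pi_div_two_sub_arcsin]
  have := Real.monotone_arcsin h
  linarith

-- A3
lemma my_sqrt_le_arccos {t : ℝ} (ht0 : 0 ≤ t) (ht1 : t ≤ 1) :
    Real.sqrt (2 * t) ≤ Real.arccos (1 - t) := by
  set r := Real.sqrt (2 * t) with hr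
  have hr0 : 0 ≤ r := Real.sqrt_nonneg _
  have hr2 : r ^ 2 = 2 * t := Real.sq_sqrt (by linarith)
  have hrπ : r ≤ π := by nlinarith [Real.pi_gt_three]
  have hcos : 1 - t ≤ Real.cos r := by
    have := Real.one_sub_sq_div_two_le_cos (x := r)
    nlinarith
  calc r = Real.arccos (Real.cos r) := (Real.arccos_cos hr0 hrπ).symm
    _ ≤ Real.arccos (1 - t) := my_arccos_anti hcos

-- A4'
lemma my_arccos_ge_lin {u : ℝ} (hu0 : 0 ≤ u) (hu1 : u ≤ 1) :
    π / 2 * (1 - u) ≤ Real.arccos u := by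
  have h := my_arccos_mul (c := 1) (d := u) zero_le_one le_rfl hu0 hu1
  rw [Real.arccos_one, one_mul] at h
  linarith

-- arccos (1/2) = pi/3
lemma my_arccos_half : Real.arccos (1/2) = π / 3 := by
  rw [show (1/2 : ℝ) = Real.cos (π/3) by rw [Real.cos_pi_div_three]]
  exact Real.arccos_cos (by positivity) (by linarith [Real.pi_pos])

lemma my_sin_mono {u v : ℝ} (hu : -(π/2) ≤ u) (huv : u ≤ v) (hv : v ≤ π/2) :
    Real.sin u ≤ Real.sin v := by
  rcases eq_or_lt_of_le huv with rfl | h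
  · exact le_refl _
  · exact (Real.sin_lt_sin_of_lt_of_le_pi_div_two hu hv h).le

-- A8: arccos difference bound
lemma my_arccos_diff {a b : ℝ} (ha0 : 0 ≤ a) (hab : a ≤ b) (hb1 : b ≤ 1) :
    b - a ≤ (Real.arccos a - Real.arccos b) * Real.sqrt (1 - a ^ 2) := by
  set A := Real.arccos a with hA
  set B := Real.arccos b with hB
  have hBA : B ≤ A := my_arccos_anti hab
  have hB0 : 0 ≤ B := Real.arccos_nonneg b
  have hA2 : A ≤ π/2 := Real.arccos_le_pi_div_two.2 ha0
  have hcosA : Real.cos A = a := Real.cos_arccos (by linarith) (by linarith)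
  have hcosB : Real.cos B = b := Real.cos_arccos (by linarith) hb1
  have hdiff : b - a = 2 * Real.sin ((A+B)/2) * Real.sin ((A-B)/2) := by
    have := Real.cos_sub_cos B A
    rw [hcosA, hcosB] at this
    have h2 : Real.sin ((B - A)/2) = - Real.sin ((A-B)/2) := by
      rw [← Real.sin_neg]; ring_nf
    rw [h2] at this
    have hcomm : (B + A) / 2 = (A + B) / 2 := by ring
    rw [hcomm] at this
    linarith [this]
  have h1 : Real.sin ((A-B)/2) ≤ (A-B)/2 := Real.sin_le (by linarith)
  have h1' : 0 ≤ Real.sin ((A-B)/2) := Real.sin_nonneg_of_nonneg_of_le_pi (by linarith)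
      (by linarith [Real.pi_pos])
  have h2 : Real.sin ((A+B)/2) ≤ Real.sin A := my_sin_mono (by linarith [Real.pi_pos])
      (by linarith) (by linarith)
  have h2' : 0 ≤ Real.sin ((A+B)/2) := Real.sin_nonneg_of_nonneg_of_le_pi (by linarith)
      (by linarith [Real.pi_pos])
  have hsinA : Real.sin A = Real.sqrt (1 - a ^ 2) := Real.sin_arccos a
  calc b - a = 2 * Real.sin ((A+B)/2) * Real.sin ((A-B)/2) := hdiff
    _ ≤ 2 * Real.sin A * ((A-B)/2) := by nlinarith [hsinA, Real.sqrt_nonneg (1 - a^2)]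
    _ = (A - B) * Real.sqrt (1 - a ^ 2) := by rw [hsinA]; ring

-- piece a: 0 ≤ θ ≤ 21/25
lemma my_phi_a {θ : ℝ} (h0 : 0 ≤ θ) (h1 : θ ≤ 21/25) :
    π * (1 - Real.cos θ) ≤ (2 - Real.cos θ) * θ := by
  have hb := Real.cos_bound (x := θ) (by rw [abs_of_nonneg h0]; linarith)
  have hcub : Real.cos θ ≤ 1 - θ^2/2 + |θ|^4 * (5/96) := by
    have := abs_le.1 hb; linarith [this.2]
  rw [abs_of_nonneg h0] at hcub
  have hclb : 1 - θ^2/2 ≤ Real.cos θ := Real.one_sub_sq_div_two_le_cos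
  have hπ : π < 3.141593 := Real.pi_lt_d6
  nlinarith [sq_nonneg θ, sq_nonneg (θ - 21/25), mul_nonneg h0 (sub_nonneg.2 h1),
    mul_nonneg (mul_nonneg h0 h0) (sub_nonneg.2 h1), Real.pi_pos,
    mul_nonneg (mul_nonneg (mul_nonneg h0 h0) h0) (sub_nonneg.2 h1)]

-- derivative of Φ
lemma my_phi_hasDeriv (θ : ℝ) :
    HasDerivAt (fun θ : ℝ => (2 - Real.cos θ) * θ - π * (1 - Real.cos θ))
      (Real.sin θ * θ + (2 - Real.cos θ) - π * Real.sin θ) θ := by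
  have h1 : HasDerivAt (fun θ : ℝ => (2 - Real.cos θ)) (Real.sin θ) θ := by
    simpa using (Real.hasDerivAt_cos θ).const_sub 2
  have h2 : HasDerivAt (fun θ : ℝ => (2 - Real.cos θ) * θ)
      (Real.sin θ * θ + (2 - Real.cos θ) * 1) θ := h1.mul (hasDerivAt_id θ)
  have h3 : HasDerivAt (fun θ : ℝ => π * (1 - Real.cos θ)) (π * Real.sin θ) θ := by
    simpa using ((Real.hasDerivAt_cos θ).const_sub 1).const_mul π
  have h4 := h2.sub h3
  simp only [mul_one] at h4
  exact h4

-- derivative nonpos on [21/25, π/3]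
lemma my_phi_deriv_nonpos {θ : ℝ} (h0 : 21/25 ≤ θ) (h1 : θ ≤ π/3) :
    Real.sin θ * θ + (2 - Real.cos θ) - π * Real.sin θ ≤ 0 := by
  have hπ1 : (3.141592 : ℝ) < π := Real.pi_gt_d6
  have hπ2 : π < 3.141593 := Real.pi_lt_d6
  have hθub : θ ≤ 1.047198 := by nlinarith
  have hsin : 1 - (π/2 - θ)^2/2 ≤ Real.sin θ := by
    have := Real.one_sub_sq_div_two_le_cos (x := π/2 - θ)
    rwa [Real.cos_pi_div_two_sub] at this
  have hcos : 1 - θ^2/2 ≤ Real.cos θ := Real.one_sub_sq_div_two_le_cos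
  have hsin1 : Real.sin θ ≤ 1 := Real.sin_le_one θ
  nlinarith [sq_nonneg (π/2 - θ), sq_nonneg θ, mul_nonneg (sub_nonneg.2 h0) (sub_nonneg.2 h1)]

lemma my_phi_nonneg {θ : ℝ} (h0 : 0 ≤ θ) (h1 : θ ≤ π/3) :
    π * (1 - Real.cos θ) ≤ (2 - Real.cos θ) * θ := by
  rcases le_total θ (21/25) with h | h
  · exact my_phi_a h0 h
  · -- antitone on [21/25, π/3]
    set Φ : ℝ → ℝ := fun θ => (2 - Real.cos θ) * θ - π * (1 - Real.cos θ) with hΦ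
    have hanti : AntitoneOn Φ (Icc (21/25) (π/3)) := by
      apply antitoneOn_of_deriv_nonpos (convex_Icc _ _)
      · exact ((continuous_const.sub Real.continuous_cos).mul continuous_id').sub
          (continuous_const.mul (continuous_const.sub Real.continuous_cos)) |>.continuousOn
      · intro x hx
        exact (my_phi_hasDeriv x).differentiableAt.differentiableWithinAt
      · intro x hx
        rw [interior_Icc] at hx
        rw [(my_phi_hasDeriv x).deriv]
        exact my_phi_deriv_nonpos hx.1.le hx.2.le
    have hend : Φ (π/3) = 0 := by
      simp only [hΦ, Real.cos_pi_div_three]; ring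
    have := hanti ⟨h, h1⟩ ⟨(by linarith : (21:ℝ)/25 ≤ π/3), le_rfl⟩ h1
    rw [hend] at this
    simp only [hΦ] at this
    linarith

lemma my_N_hasDeriv {v : ℝ} (h0 : 0 < v) (h1 : v < 1) :
    HasDerivAt (fun v : ℝ => (1+v) * Real.arccos (1-v))
      (Real.arccos (1-v) + (1+v) * (1 / Real.sqrt (1 - (1-v)^2))) v := by
  have hne1 : (1:ℝ) - v ≠ -1 := by linarith
  have hne2 : (1:ℝ) - v ≠ 1 := by linarith
  have hinner : HasDerivAt (fun v : ℝ => 1 - v) (-1) v := by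
    simpa using (hasDerivAt_id v).const_sub 1
  have harccos : HasDerivAt (fun v : ℝ => Real.arccos (1-v))
      (1 / Real.sqrt (1 - (1-v)^2)) v := by
    have := (Real.hasDerivAt_arccos hne1 hne2).comp v hinner
    simpa [Function.comp_def] using this
  have hmul : HasDerivAt (fun v : ℝ => (1+v) * Real.arccos (1-v))
      (1 * Real.arccos (1-v) + (1+v) * (1 / Real.sqrt (1 - (1-v)^2))) v :=
    (((hasDerivAt_id v).const_add 1)).mul harccos
  simpa using hmul

-- star: q(v) = (1+v) arccos(1-v) / v is antitone on [t,u] ⊂ (0,1/2]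
lemma my_star {t u : ℝ} (ht : 0 < t) (htu : t ≤ u) (hu : u ≤ 1/2) :
    t * ((1+u) * Real.arccos (1-u)) ≤ u * ((1+t) * Real.arccos (1-t)) := by
  set q : ℝ → ℝ := fun v => (1+v) * Real.arccos (1-v) / v with hq
  have hanti : AntitoneOn q (Icc t u) := by
    apply antitoneOn_of_deriv_nonpos (convex_Icc _ _)
    · apply ContinuousOn.div
      · exact ((continuous_const.add continuous_id').mul
          (Real.continuous_arccos.comp (continuous_const.sub continuous_id'))).continuousOn
      · exact continuousOn_id
      · intro v hv; exact ne_of_gt (lt_of_lt_of_le ht hv.1)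
    · intro v hv
      rw [interior_Icc] at hv
      have hv0 : 0 < v := lt_trans ht hv.1
      have hv1 : v < 1 := by linarith [hv.2]
      exact ((my_N_hasDeriv hv0 hv1).div (hasDerivAt_id v) (ne_of_gt hv0)).differentiableAt.differentiableWithinAt
    · intro v hv
      rw [interior_Icc] at hv
      have hv0 : 0 < v := lt_trans ht hv.1
      have hv1 : v < 1/2 := lt_of_lt_of_le hv.2 hu
      have hderiv0 := (my_N_hasDeriv hv0 (by linarith)).div (hasDerivAt_id v) (ne_of_gt hv0)
      have hderiv : HasDerivAt q
          (((Real.arccos (1-v) + (1+v) * (1 / Real.sqrt (1 - (1-v)^2))) * v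
            - (1+v) * Real.arccos (1-v) * 1) / v ^ 2) v := by
        simpa [hq, id, Pi.div_def] using hderiv0
      rw [hderiv.deriv]
      have hnum : (Real.arccos (1-v) + (1+v) * (1 / Real.sqrt (1 - (1-v)^2))) * v
          - (1+v) * Real.arccos (1-v) * 1 ≤ 0 := by
        -- = v(1+v)/sqrt(...) - arccos(1-v) ≤ 0
        have hsq : (1:ℝ) - (1-v)^2 = v * (2-v) := by ring
        have hsqrtpos : 0 < Real.sqrt (1 - (1-v)^2) := by
          rw [hsq]; exact Real.sqrt_pos.2 (by nlinarith)
        have hkey : v * (1+v) / Real.sqrt (1 - (1-v)^2) ≤ Real.sqrt (2*v) := by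
          rw [div_le_iff₀ hsqrtpos, hsq]
          have hmulsqrt : Real.sqrt (2*v) * Real.sqrt (v*(2-v))
              = Real.sqrt (2*v*(v*(2-v))) := (Real.sqrt_mul (by linarith) _).symm
          rw [hmulsqrt]
          apply Real.le_sqrt' (by nlinarith) |>.2
          have hfac : (0:ℝ) ≤ 3 - 4*v - v^2 := by nlinarith
          nlinarith [mul_nonneg (mul_pos hv0 hv0).le hfac]
        have harc : Real.sqrt (2*v) ≤ Real.arccos (1-v) :=
          my_sqrt_le_arccos hv0.le (by linarith)
        have : (1+v) * (1 / Real.sqrt (1 - (1-v)^2)) * v = v*(1+v) / Real.sqrt (1-(1-v)^2) := by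
          ring
        nlinarith [this]
      have hv2 : (0:ℝ) < v^2 := by positivity
      apply div_nonpos_of_nonpos_of_nonneg
      · simpa using hnum
      · positivity
  have h1 : q u ≤ q t := hanti ⟨le_rfl, htu⟩ ⟨htu, le_rfl⟩ htu
  have hu0 : 0 < u := lt_of_lt_of_le ht htu
  rw [hq] at h1
  simp only at h1
  rw [div_le_div_iff₀ hu0 ht] at h1
  linarith

section
variable {m : ℕ}

-- shift lemma
lemma my_shift1 (m : ℕ) (h : ℕ → ℝ) (hp : ∀ i, h (i + m) = h i) :
    ∑ i ∈ Finset.range m, h (i + 1) = ∑ i ∈ Finset.range m, h i := by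
  have h1 : ∑ i ∈ Finset.range (m+1), h i = (∑ i ∈ Finset.range m, h (i+1)) + h 0 :=
    Finset.sum_range_succ' h m
  have h2 : ∑ i ∈ Finset.range (m+1), h i = (∑ i ∈ Finset.range m, h i) + h m :=
    Finset.sum_range_succ h m
  have h3 : h m = h 0 := by simpa using hp 0
  linarith

lemma my_shiftk (m : ℕ) (h : ℕ → ℝ) (hp : ∀ i, h (i + m) = h i) (k : ℕ) :
    ∑ i ∈ Finset.range m, h (i + k) = ∑ i ∈ Finset.range m, h i := by
  induction k with
  | zero => simp
  | succ k ih =>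
    have step : ∑ i ∈ Finset.range m, h (i + (k+1)) = ∑ i ∈ Finset.range m, h (i + k) := by
      have := my_shift1 m (fun j => h (j + k)) (fun i => by
        have : i + m + k = i + k + m := by ring
        show h (i + m + k) = h (i + k)
        rw [this, hp])
      simpa only [Nat.add_assoc, Nat.add_comm 1 k] using this
    rw [step, ih]

-- sum over a 3-element subset
lemma my_triple_sum (m : ℕ) (x : ℕ → ℝ) (h0 : ∀ i, 0 ≤ x i)
    (hsum : ∑ i ∈ Finset.range m, x i = 1) {a b c : ℕ}
    (ha : a < m) (hb : b < m) (hc : c < m)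
    (hab : a ≠ b) (hac : a ≠ c) (hbc : b ≠ c) :
    x a + x b + x c ≤ 1 := by
  have hsub : ({a, b, c} : Finset ℕ) ⊆ Finset.range m := by
    intro i hi
    simp only [Finset.mem_insert, Finset.mem_singleton] at hi
    rcases hi with rfl | rfl | rfl <;> simpa [Finset.mem_range]
  have hs : ∑ i ∈ ({a, b, c} : Finset ℕ), x i = x a + x b + x c := by
    rw [Finset.sum_insert (by simp [hab, hac]), Finset.sum_insert (by simp [hbc]),
      Finset.sum_singleton]
    ring
  calc x a + x b + x c = ∑ i ∈ ({a, b, c} : Finset ℕ), x i := hs.symm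
    _ ≤ ∑ i ∈ Finset.range m, x i :=
        Finset.sum_le_sum_of_subset_of_nonneg hsub (fun i _ _ => h0 i)
    _ = 1 := hsum

lemma my_pair_sum (m : ℕ) (x : ℕ → ℝ) (h0 : ∀ i, 0 ≤ x i)
    (hsum : ∑ i ∈ Finset.range m, x i = 1) {a b : ℕ}
    (ha : a < m) (hb : b < m) (hab : a ≠ b) :
    x a + x b ≤ 1 := by
  have hsub : ({a, b} : Finset ℕ) ⊆ Finset.range m := by
    intro i hi
    simp only [Finset.mem_insert, Finset.mem_singleton] at hi
    rcases hi with rfl | rfl <;> simpa [Finset.mem_range]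
  have hs : ∑ i ∈ ({a, b} : Finset ℕ), x i = x a + x b := Finset.sum_pair hab
  calc x a + x b = ∑ i ∈ ({a, b} : Finset ℕ), x i := hs.symm
    _ ≤ ∑ i ∈ Finset.range m, x i :=
        Finset.sum_le_sum_of_subset_of_nonneg hsub (fun i _ _ => h0 i)
    _ = 1 := hsum

-- neighbor-sum bound: x (i+1) + x (i+m-1) ≤ 1 - x i for i < m (m ≥ 3)
lemma my_nbr (m : ℕ) (hm : 3 ≤ m) (x : ℕ → ℝ) (hper : ∀ i, x (i + m) = x i)
    (h0 : ∀ i, 0 ≤ x i) (hsum : ∑ i ∈ Finset.range m, x i = 1) :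
    ∀ i < m, x (i + 1) + x (i + (m - 1)) ≤ 1 - x i := by
  intro i hi
  rcases Nat.eq_zero_or_pos i with rfl | hipos
  · -- i = 0 : x 1 + x (m-1) ≤ 1 - x 0
    have h1 : (0:ℕ) + 1 = 1 := rfl
    have h2 : (0:ℕ) + (m - 1) = m - 1 := by omega
    rw [h1, h2]
    have := my_triple_sum m x h0 hsum (a := 0) (b := 1) (c := m - 1)
      (by omega) (by omega) (by omega) (by omega) (by omega) (by omega)
    linarith
  · rcases Nat.lt_or_ge (i+1) m with hi1 | hi1
    · -- 1 ≤ i, i+1 < m : indices i-1, i, i+1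
      have h2 : x (i + (m - 1)) = x (i - 1) := by
        have : i + (m - 1) = (i - 1) + m := by omega
        rw [this, hper]
      rw [h2]
      have := my_triple_sum m x h0 hsum (a := i) (b := i+1) (c := i-1)
        hi hi1 (by omega) (by omega) (by omega) (by omega)
      linarith
    · -- i = m - 1 : x m = x 0, x (i + m - 1) = x (m - 2)
      have hieq : i = m - 1 := by omega
      have h1 : x (i + 1) = x 0 := by
        have : i + 1 = 0 + m := by omega
        rw [this, hper]
      have h2 : x (i + (m - 1)) = x (m - 2) := by
        have : i + (m - 1) = (m - 2) + m := by omega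
        rw [this, hper]
      rw [h1, h2]
      have := my_triple_sum m x h0 hsum (a := i) (b := 0) (c := m - 2)
        hi (by omega) (by omega) (by omega) (by omega) (by omega)
      linarith

end

-- derivative of V
lemma my_V_hasDeriv {w : ℝ} (h0 : 0 < w) (h1 : w < 1/2) :
    HasDerivAt (fun w : ℝ => (3/2 + w) * Real.arccos (1/2 - w) + (3/2 - w) * Real.arccos (1/2 + w))
      (Real.arccos (1/2 - w) + (3/2 + w) * (1 / Real.sqrt (1 - (1/2 - w)^2))
        - Real.arccos (1/2 + w) - (3/2 - w) * (1 / Real.sqrt (1 - (1/2 + w)^2))) w := by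
  have ha1 : (1:ℝ)/2 - w ≠ -1 := by intro h; linarith
  have ha2 : (1:ℝ)/2 - w ≠ 1 := by intro h; linarith
  have hb1 : (1:ℝ)/2 + w ≠ -1 := by intro h; linarith
  have hb2 : (1:ℝ)/2 + w ≠ 1 := by intro h; linarith
  have hA : HasDerivAt (fun w : ℝ => Real.arccos (1/2 - w))
      (1 / Real.sqrt (1 - (1/2 - w)^2)) w := by
    have hinner : HasDerivAt (fun w : ℝ => 1/2 - w) (-1) w := by
      simpa using (hasDerivAt_id w).const_sub (1/2 : ℝ)
    have := (Real.hasDerivAt_arccos ha1 ha2).comp w hinner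
    simpa [Function.comp_def] using this
  have hB : HasDerivAt (fun w : ℝ => Real.arccos (1/2 + w))
      (-(1 / Real.sqrt (1 - (1/2 + w)^2))) w := by
    have hinner : HasDerivAt (fun w : ℝ => 1/2 + w) 1 w := by
      simpa using (hasDerivAt_id w).const_add (1/2 : ℝ)
    have := (Real.hasDerivAt_arccos hb1 hb2).comp w hinner
    simpa [Function.comp_def] using this
  have h3 : HasDerivAt (fun w : ℝ => (3/2 + w) * Real.arccos (1/2 - w))
      (1 * Real.arccos (1/2 - w) + (3/2 + w) * (1 / Real.sqrt (1 - (1/2 - w)^2))) w :=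
    ((hasDerivAt_id w).const_add (3/2 : ℝ)).mul hA
  have h4 : HasDerivAt (fun w : ℝ => (3/2 - w) * Real.arccos (1/2 + w))
      ((-1) * Real.arccos (1/2 + w) + (3/2 - w) * (-(1 / Real.sqrt (1 - (1/2 + w)^2)))) w := by
    have hc : HasDerivAt (fun w : ℝ => 3/2 - w) (-1) w := by
      simpa using (hasDerivAt_id w).const_sub (3/2 : ℝ)
    exact hc.mul hB
  have h5 := h3.add h4
  have e : 1 * Real.arccos (1/2 - w) + (3/2 + w) * (1 / Real.sqrt (1 - (1/2 - w)^2))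
      + ((-1) * Real.arccos (1/2 + w) + (3/2 - w) * (-(1 / Real.sqrt (1 - (1/2 + w)^2))))
      = Real.arccos (1/2 - w) + (3/2 + w) * (1 / Real.sqrt (1 - (1/2 - w)^2))
        - Real.arccos (1/2 + w) - (3/2 - w) * (1 / Real.sqrt (1 - (1/2 + w)^2)) := by ring
  rwa [e] at h5

lemma my_V_deriv_nonneg {w : ℝ} (h0 : 0 < w) (h1 : w < 21/50) :
    0 ≤ Real.arccos (1/2 - w) + (3/2 + w) * (1 / Real.sqrt (1 - (1/2 - w)^2))
        - Real.arccos (1/2 + w) - (3/2 - w) * (1 / Real.sqrt (1 - (1/2 + w)^2)) := by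
  have ha0 : (0:ℝ) < 1/2 - w := by linarith
  have hb1' : (1:ℝ)/2 + w < 1 := by linarith
  have hsa_pos : 0 < Real.sqrt (1 - (1/2 - w)^2) := Real.sqrt_pos.2 (by nlinarith)
  have hsb_pos : 0 < Real.sqrt (1 - (1/2 + w)^2) := Real.sqrt_pos.2 (by nlinarith)
  have hsa2 : (Real.sqrt (1 - (1/2 - w)^2))^2 = 1 - (1/2 - w)^2 := Real.sq_sqrt (by nlinarith)
  have hsb2 : (Real.sqrt (1 - (1/2 + w)^2))^2 = 1 - (1/2 + w)^2 := Real.sq_sqrt (by nlinarith)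
  have hdiff : (1/2 + w) - (1/2 - w) ≤ (Real.arccos (1/2 - w) - Real.arccos (1/2 + w))
      * Real.sqrt (1 - (1/2 - w)^2) := my_arccos_diff ha0.le (by linarith) hb1'.le
  have hdiff2 : 2*w*(1 / Real.sqrt (1 - (1/2 - w)^2))
      ≤ Real.arccos (1/2 - w) - Real.arccos (1/2 + w) := by
    rw [mul_one_div, div_le_iff₀ hsa_pos]
    linarith
  have hkey : (3/2 - w) * (1 / Real.sqrt (1 - (1/2 + w)^2))
      ≤ (3/2 + 3*w) * (1 / Real.sqrt (1 - (1/2 - w)^2)) := by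
    rw [mul_one_div, mul_one_div, div_le_div_iff₀ hsb_pos hsa_pos]
    have hsq : ((3/2 - w) * Real.sqrt (1 - (1/2 - w)^2))^2
        ≤ ((3/2 + 3*w) * Real.sqrt (1 - (1/2 + w)^2))^2 := by
      rw [mul_pow, mul_pow, hsa2, hsb2]
      nlinarith [mul_nonneg h0.le (sub_nonneg.2 h1.le), sq_nonneg w,
        mul_nonneg (mul_nonneg h0.le h0.le) (sub_nonneg.2 h1.le),
        mul_nonneg (mul_nonneg (mul_nonneg h0.le h0.le) h0.le) (sub_nonneg.2 h1.le)]
    have hlhs_nonneg : 0 ≤ (3/2 - w) * Real.sqrt (1 - (1/2 - w)^2) :=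
      mul_nonneg (by linarith) hsa_pos.le
    have hrhs_nonneg : 0 ≤ (3/2 + 3*w) * Real.sqrt (1 - (1/2 + w)^2) :=
      mul_nonneg (by linarith) hsb_pos.le
    nlinarith [hsq, hlhs_nonneg, hrhs_nonneg]
  have hz : 2*w*(1 / Real.sqrt (1 - (1/2 - w)^2)) + (3/2+w)*(1 / Real.sqrt (1 - (1/2 - w)^2))
      - (3/2+3*w)*(1 / Real.sqrt (1 - (1/2 - w)^2)) = 0 := by ring
  linarith [hdiff2, hkey, hz]

lemma my_J {s : ℝ} (h0 : 1/2 ≤ s) (h1 : s ≤ 1) :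
    π ≤ (1 + s) * Real.arccos (1 - s) + (2 - s) * Real.arccos s := by
  obtain ⟨w, rfl⟩ : ∃ w, s = 1/2 + w := ⟨s - 1/2, by ring⟩
  have hw0 : 0 ≤ w := by linarith
  have hw1 : w ≤ 1/2 := by linarith
  have e1 : (1:ℝ) - (1/2 + w) = 1/2 - w := by ring
  have e2 : (1:ℝ) + (1/2 + w) = 3/2 + w := by ring
  have e3 : (2:ℝ) - (1/2 + w) = 3/2 - w := by ring
  rw [e1, e2, e3]
  rcases le_total w (21/50) with hcase | hcase
  · -- monotone piece
    have hmono : MonotoneOn (fun w : ℝ => (3/2 + w) * Real.arccos (1/2 - w)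
        + (3/2 - w) * Real.arccos (1/2 + w)) (Icc 0 (21/50)) := by
      apply monotoneOn_of_deriv_nonneg (convex_Icc _ _)
      · apply ContinuousOn.add
        · exact ((continuous_const.add continuous_id').mul
            (Real.continuous_arccos.comp (continuous_const.sub continuous_id'))).continuousOn
        · exact ((continuous_const.sub continuous_id').mul
            (Real.continuous_arccos.comp (continuous_const.add continuous_id'))).continuousOn
      · intro v hv
        rw [interior_Icc] at hv
        exact (my_V_hasDeriv hv.1 (by linarith [hv.2])).differentiableAt.differentiableWithinAt
      · intro v hv
        rw [interior_Icc] at hv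
        rw [(my_V_hasDeriv hv.1 (by linarith [hv.2])).deriv]
        exact my_V_deriv_nonneg hv.1 hv.2
    have := hmono (left_mem_Icc.2 (by norm_num)) ⟨hw0, hcase⟩ hw0
    simp only at this
    have hV0 : (3/2 + 0) * Real.arccos (1/2 - 0) + (3/2 - 0) * Real.arccos (1/2 + 0) = π := by
      norm_num
      rw [my_arccos_half]
      ring
    rw [hV0] at this
    exact this
  · -- tail piece
    obtain ⟨ε, rfl⟩ : ∃ e, w = 1/2 - e := ⟨1/2 - w, by ring⟩
    have hε0 : 0 ≤ ε := by linarith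
    have hε1 : ε ≤ 2/25 := by linarith
    have f1 : (1:ℝ)/2 - (1/2 - ε) = ε := by ring
    have f2 : (1:ℝ)/2 + (1/2 - ε) = 1 - ε := by ring
    have f3 : (3:ℝ)/2 + (1/2 - ε) = 2 - ε := by ring
    have f4 : (3:ℝ)/2 - (1/2 - ε) = 1 + ε := by ring
    rw [f1, f2, f3, f4]
    have hA : π/2 * (1 - ε) ≤ Real.arccos ε := my_arccos_ge_lin hε0 (by linarith)
    have hB : Real.sqrt (2*ε) ≤ Real.arccos (1 - ε) := my_sqrt_le_arccos hε0 (by linarith)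
    set r := Real.sqrt (2*ε) with hr
    have hr0 : 0 ≤ r := Real.sqrt_nonneg _
    have hr2 : r^2 = 2*ε := Real.sq_sqrt (by linarith)
    have hr4 : r ≤ 2/5 := by nlinarith
    have hπ2 : π < 3.141593 := Real.pi_lt_d6
    have hfinal : π ≤ (2 - ε) * (π/2 * (1-ε)) + (1 + ε) * r := by
      have hbr : (3*π/4)*r ≤ 19/20 := by nlinarith
      have hbr2 : (3*π/4)*r*r ≤ (19/20)*r := mul_le_mul_of_nonneg_right hbr hr0
      have hq : (π/2) * (r^2/2) * (3 - r^2/2) ≤ (1 + r^2/2) * r := by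
        have h4 : 0 ≤ (π/8)*r^4 := by positivity
        have h5 : 0 ≤ (r^2/2)*r := by positivity
        nlinarith [hbr2, h4, h5]
      have hεr : ε = r^2/2 := by linarith
      rw [hεr]
      nlinarith [hq]
    have hstep1 : (2 - ε) * (π/2 * (1-ε)) ≤ (2 - ε) * Real.arccos ε :=
      mul_le_mul_of_nonneg_left hA (by linarith)
    have hstep2 : (1 + ε) * r ≤ (1 + ε) * Real.arccos (1 - ε) :=
      mul_le_mul_of_nonneg_left hB (by linarith)
    linarith

-- P1 wrapper
lemma my_P1 {t : ℝ} (h0 : 0 ≤ t) (h1 : t ≤ 1/2) :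
    π * t ≤ (1 + t) * Real.arccos (1 - t) := by
  set θ := Real.arccos (1 - t) with hθ
  have hcos : Real.cos θ = 1 - t := Real.cos_arccos (by linarith) (by linarith)
  have hθ0 : 0 ≤ θ := Real.arccos_nonneg _
  have hθπ3 : θ ≤ π/3 := by
    have := my_arccos_anti (show (1:ℝ)/2 ≤ 1 - t by linarith)
    rwa [my_arccos_half] at this
  have h := my_phi_nonneg hθ0 hθπ3
  rw [hcos] at h
  nlinarith [h]

-- Step 3
lemma my_sumG (m : ℕ) (hm : 3 ≤ m) (x : ℕ → ℝ)
    (h0 : ∀ i, 0 ≤ x i) (h1 : ∀ i, x i ≤ 1)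
    (hsum : ∑ i ∈ Finset.range m, x i = 1) :
    π ≤ ∑ i ∈ Finset.range m, (1 + x i) * Real.arccos (1 - x i) := by
  have hne : (Finset.range m).Nonempty := ⟨0, Finset.mem_range.2 (by omega)⟩
  obtain ⟨k, hk, hkmax⟩ := Finset.exists_max_image (Finset.range m) x hne
  have hGnonneg : ∀ i, 0 ≤ (1 + x i) * Real.arccos (1 - x i) :=
    fun i => mul_nonneg (by linarith [h0 i]) (Real.arccos_nonneg _)
  rcases le_total (x k) (1/2) with hs | hs
  · -- all ≤ 1/2
    have hpt : ∀ i ∈ Finset.range m, π * x i ≤ (1 + x i) * Real.arccos (1 - x i) :=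
      fun i hi => my_P1 (h0 i) ((hkmax i hi).trans hs)
    calc π = π * ∑ i ∈ Finset.range m, x i := by rw [hsum, mul_one]
      _ = ∑ i ∈ Finset.range m, π * x i := Finset.mul_sum _ _ _
      _ ≤ _ := Finset.sum_le_sum hpt
  · rcases le_or_gt 1 (x k) with hs1 | hs1
    · -- x k = 1
      have hxk : x k = 1 := le_antisymm (h1 k) hs1
      have hval : (1 + x k) * Real.arccos (1 - x k) = π := by
        rw [hxk]; norm_num [Real.arccos_zero]; ring
      calc π = (1 + x k) * Real.arccos (1 - x k) := hval.symm
        _ ≤ _ := Finset.single_le_sum (fun i _ => hGnonneg i) hk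
    · -- 1/2 < x k < 1
      have hτ0 : 0 < 1 - x k := by linarith
      have hτhalf : 1 - x k ≤ 1/2 := by linarith
      have herase : ∑ i ∈ (Finset.range m).erase k, x i = 1 - x k := by
        have h := Finset.sum_erase_add (Finset.range m) x hk
        rw [hsum] at h
        linarith
      have hxi : ∀ i ∈ (Finset.range m).erase k, x i ≤ 1 - x k := by
        intro i hi
        have hik : i ≠ k := Finset.ne_of_mem_erase hi
        have him : i ∈ Finset.range m := Finset.mem_of_mem_erase hi
        have := my_pair_sum m x h0 hsum (Finset.mem_range.1 him) (Finset.mem_range.1 hk) hik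
        linarith
      have hstar : ∀ i ∈ (Finset.range m).erase k,
          x i * ((1 + (1 - x k)) * Real.arccos (1 - (1 - x k)))
            ≤ (1 - x k) * ((1 + x i) * Real.arccos (1 - x i)) := by
        intro i hi
        rcases eq_or_lt_of_le (h0 i) with hz | hz
        · rw [← hz]; simpa using mul_nonneg hτ0.le (hGnonneg i)
        · exact my_star hz (hxi i hi) hτhalf
      have hsum_star : (1 - x k) * ((2 - x k) * Real.arccos (x k))
          ≤ (1 - x k) * (∑ i ∈ (Finset.range m).erase k, (1 + x i) * Real.arccos (1 - x i)) := by
        have hstep : ∑ i ∈ (Finset.range m).erase k,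
            x i * ((1 + (1 - x k)) * Real.arccos (1 - (1 - x k)))
            ≤ ∑ i ∈ (Finset.range m).erase k, (1 - x k) * ((1 + x i) * Real.arccos (1 - x i)) :=
          Finset.sum_le_sum hstar
        have e1 : ∑ i ∈ (Finset.range m).erase k,
            x i * ((1 + (1 - x k)) * Real.arccos (1 - (1 - x k)))
            = (1 - x k) * ((2 - x k) * Real.arccos (x k)) := by
          rw [← Finset.sum_mul, herase]
          have : (1:ℝ) + (1 - x k) = 2 - x k := by ring
          rw [this]
          have : (1:ℝ) - (1 - x k) = x k := by ring
          rw [this]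
        have e2 : ∑ i ∈ (Finset.range m).erase k, (1 - x k) * ((1 + x i) * Real.arccos (1 - x i))
            = (1 - x k) * (∑ i ∈ (Finset.range m).erase k, (1 + x i) * Real.arccos (1 - x i)) :=
          (Finset.mul_sum _ _ _).symm
        rw [e1, e2] at hstep
        exact hstep
      have hdiv : (2 - x k) * Real.arccos (x k)
          ≤ ∑ i ∈ (Finset.range m).erase k, (1 + x i) * Real.arccos (1 - x i) :=
        le_of_mul_le_mul_left (by linarith [hsum_star]) hτ0
      have hJ := my_J hs (h1 k)
      have hsplit := Finset.sum_erase_add (Finset.range m) 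
        (fun i => (1 + x i) * Real.arccos (1 - x i)) hk
      calc π ≤ (1 + x k) * Real.arccos (1 - x k) + (2 - x k) * Real.arccos (x k) := hJ
        _ ≤ (1 + x k) * Real.arccos (1 - x k)
            + ∑ i ∈ (Finset.range m).erase k, (1 + x i) * Real.arccos (1 - x i) := by
            linarith [hdiv]
        _ = ∑ i ∈ Finset.range m, (1 + x i) * Real.arccos (1 - x i) := by
            rw [← hsplit]; ring

/-- For `m ≥ 3`, cyclic `0 ≤ x i ≤ 1` with `∑ x i = 1`, setting
`Δ i = x i + x (i+1) - x i * x (i+1)`, one has `∑ (2/π) arccos (1 - Δ i) ≥ 2`. -/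
theorem stmt8 (m : ℕ) (hm : 3 ≤ m) (x : ℕ → ℝ)
    (hper : ∀ i, x (i + m) = x i)
    (h0 : ∀ i, 0 ≤ x i) (h1 : ∀ i, x i ≤ 1)
    (hsum : ∑ i ∈ Finset.range m, x i = 1) :
    2 ≤ ∑ i ∈ Finset.range m,
        (2 / Real.pi) * Real.arccos (1 - (x i + x (i + 1) - x i * x (i + 1))) := by
  set Acs : ℕ → ℝ := fun j => Real.arccos (1 - x j) with hAcs
  have hApos : ∀ j, 0 ≤ Acs j := fun j => Real.arccos_nonneg _
  have hAper : ∀ j, Acs (j + m) = Acs j := fun j => by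
    simp only [hAcs]; rw [hper]
  -- key sum
  set S := ∑ i ∈ Finset.range m, Real.arccos ((1 - x i) * (1 - x (i + 1))) with hS
  -- Step 1+2 : ∑ bigterm ≤ 2*S
  have W1 : ∑ i ∈ Finset.range m,
      ((1 - x (i+1)) * Acs i + (1 - x i) * Acs (i+1) + (π/2) * (x i + x (i+1)))
      ≤ 2 * S := by
    rw [hS, Finset.mul_sum]
    apply Finset.sum_le_sum
    intro i _
    have e1 := my_arccos_mul (c := 1 - x i) (d := 1 - x (i+1))
      (by linarith [h1 i]) (by linarith [h0 i]) (by linarith [h1 (i+1)]) (by linarith [h0 (i+1)])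
    have e2 := my_arccos_mul (c := 1 - x (i+1)) (d := 1 - x i)
      (by linarith [h1 (i+1)]) (by linarith [h0 (i+1)]) (by linarith [h1 i]) (by linarith [h0 i])
    rw [show (1 - x (i+1)) * (1 - x i) = (1 - x i) * (1 - x (i+1)) by ring] at e2
    simp only [hAcs]
    nlinarith [e1, e2]
  -- sum identities
  have E3 : ∑ i ∈ Finset.range m, Acs (i+1) = ∑ i ∈ Finset.range m, Acs i :=
    my_shift1 m Acs hAper
  have E6 : ∑ i ∈ Finset.range m, x (i+1) = 1 := by
    rw [my_shift1 m x hper, hsum]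
  have E4 : ∑ i ∈ Finset.range m, x i * Acs (i+1)
      = ∑ i ∈ Finset.range m, x (i + (m-1)) * Acs i := by
    have hHper : ∀ i, (fun j => x j * Acs (j+1)) (i + m) = (fun j => x j * Acs (j+1)) i := by
      intro i
      simp only []
      rw [show i + m + 1 = (i+1) + m by ring, hper, hAper]
    have h := (my_shiftk m (fun j => x j * Acs (j+1)) hHper (m-1)).symm
    rw [h]
    apply Finset.sum_congr rfl
    intro i _
    have : i + (m-1) + 1 = i + m := by omega
    rw [this, hAper]
  -- expand W1's left side
  have W2 : ∑ i ∈ Finset.range m,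
      ((1 - x (i+1)) * Acs i + (1 - x i) * Acs (i+1) + (π/2) * (x i + x (i+1)))
      = (∑ i ∈ Finset.range m, Acs i) - (∑ i ∈ Finset.range m, x (i+1) * Acs i)
        + ((∑ i ∈ Finset.range m, Acs (i+1)) - (∑ i ∈ Finset.range m, x i * Acs (i+1)))
        + (π/2) * ((∑ i ∈ Finset.range m, x i) + (∑ i ∈ Finset.range m, x (i+1))) := by
    rw [← Finset.sum_sub_distrib, ← Finset.sum_sub_distrib, ← Finset.sum_add_distrib,
      ← Finset.sum_add_distrib, Finset.mul_sum, ← Finset.sum_add_distrib]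
    apply Finset.sum_congr rfl
    intro i _
    ring
  -- cross bound
  have E5 : (∑ i ∈ Finset.range m, x (i+1) * Acs i)
      + (∑ i ∈ Finset.range m, x (i + (m-1)) * Acs i)
      ≤ ∑ i ∈ Finset.range m, (1 - x i) * Acs i := by
    rw [← Finset.sum_add_distrib]
    apply Finset.sum_le_sum
    intro i hi
    have hn := my_nbr m hm x hper h0 hsum i (Finset.mem_range.1 hi)
    have := mul_le_mul_of_nonneg_right hn (hApos i)
    nlinarith [this]
  -- G identity
  have E7 : (∑ i ∈ Finset.range m, (1 + x i) * Acs i)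
      + (∑ i ∈ Finset.range m, (1 - x i) * Acs i)
      = 2 * (∑ i ∈ Finset.range m, Acs i) := by
    rw [← Finset.sum_add_distrib, Finset.mul_sum]
    apply Finset.sum_congr rfl
    intro i _
    ring
  have E8 : π ≤ ∑ i ∈ Finset.range m, (1 + x i) * Acs i := by
    have := my_sumG m hm x h0 h1 hsum
    simpa [hAcs] using this
  -- conclude S ≥ π
  have hkey : π ≤ S := by
    rw [W2] at W1
    rw [E3, E4, E6, hsum] at W1
    linarith [W1, E5, E7, E8]
  -- final
  have hπ : (0:ℝ) < π := Real.pi_pos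
  have hterm : ∀ i ∈ Finset.range m,
      (2 / Real.pi) * Real.arccos (1 - (x i + x (i + 1) - x i * x (i + 1)))
      = (2 / Real.pi) * Real.arccos ((1 - x i) * (1 - x (i+1))) := by
    intro i _
    rw [show (1:ℝ) - (x i + x (i + 1) - x i * x (i + 1)) = (1 - x i) * (1 - x (i+1)) by ring]
  rw [Finset.sum_congr rfl hterm, ← Finset.mul_sum, ← hS]
  calc (2:ℝ) = (2 / Real.pi) * π := by field_simp
    _ ≤ (2 / Real.pi) * S := by
        apply mul_le_mul_of_nonneg_left hkey
        positivity
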